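/- Let G be a finite simple graph with exactly 8 edges, exactly 12 vertices of odd degree, and no isolated vertices. Then every connected component of G contains exactly 2, exactly 4, or exactly 6 vertices of odd degree. -/

import Mathlib

open Finset

namespace FullereneAux

variable {V : Type}

/-- Step lemma: a vertex at positive distance from `v0` has a neighbor strictly closer. -/
lemma exists_adj_dist_succ (G : SimpleGraph V) {w v0 : V} (hr : G.Reachable w v0)
    (hne : w ≠ v0) : ∃ x, G.Adj w x ∧ G.dist x v0 + 1 = G.dist w v0 := by
  obtain ⟨p, hp⟩ := hr.exists_walk_length_eq_dist
  cases p with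
  | nil => exact absurd rfl hne
  | @cons _ x _ h q =>
    refine ⟨x, h, ?_⟩
    have h1 : G.dist x v0 ≤ q.length := SimpleGraph.dist_le q
    have h2 : G.dist w v0 ≤ G.dist x v0 + 1 := by
      obtain ⟨q', hq'⟩ := (q.reachable).exists_walk_length_eq_dist
      have := SimpleGraph.dist_le (SimpleGraph.Walk.cons h q')
      simpa [hq'] using this
    simp only [SimpleGraph.Walk.length_cons] at hp
    omega

/-- The subgraph of `G` consisting of edges inside the component `c`. -/
def compGraph (G : SimpleGraph V) (c : G.ConnectedComponent) : SimpleGraph V where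
  Adj u v := G.Adj u v ∧ G.connectedComponentMk u = c ∧ G.connectedComponentMk v = c
  symm := ⟨fun u v ⟨h, h1, h2⟩ => ⟨h.symm, h2, h1⟩⟩
  loopless := ⟨fun v ⟨h, _, _⟩ => G.loopless.irrefl v h⟩

end FullereneAux

open FullereneAux in
/-- In a finite simple graph with exactly 8 edges, exactly 12 vertices of odd
degree, and no isolated vertices, every connected component contains exactly
2, exactly 4, or exactly 6 vertices of odd degree. -/
theorem component_odd_vertices_two_four_or_six
    {V : Type} [Finite V] (G : SimpleGraph V)
    (hedges : G.edgeSet.ncard = 8)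
    (hodd : {v : V | Odd ((G.neighborSet v).ncard)}.ncard = 12)
    (hiso : ∀ v : V, (G.neighborSet v).ncard ≠ 0) :
    ∀ c : G.ConnectedComponent,
      {v : V | G.connectedComponentMk v = c ∧ Odd ((G.neighborSet v).ncard)}.ncard = 2 ∨
      {v : V | G.connectedComponentMk v = c ∧ Odd ((G.neighborSet v).ncard)}.ncard = 4 ∨
      {v : V | G.connectedComponentMk v = c ∧ Odd ((G.neighborSet v).ncard)}.ncard = 6 := by
  classical
  haveI : Fintype V := Fintype.ofFinite V
  haveI : DecidableRel G.Adj := Classical.decRel _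
  haveI : Fintype G.ConnectedComponent := Fintype.ofFinite _
  haveI : ∀ c : G.ConnectedComponent, DecidableRel (compGraph G c).Adj :=
    fun _ => Classical.decRel _
  -- basic conversions
  have hdeg : ∀ v, (G.neighborSet v).ncard = G.degree v := by
    intro v
    rw [← Nat.card_coe_set_eq, Nat.card_eq_fintype_card]
    exact G.card_neighborSet_eq_degree v
  -- neighbor finsets of compGraph
  have hnb : ∀ (c : G.ConnectedComponent) (v : V), G.connectedComponentMk v = c →
      (compGraph G c).neighborFinset v = G.neighborFinset v := by
    intro c v hv
    ext u
    simp only [SimpleGraph.mem_neighborFinset]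
    constructor
    · rintro ⟨h, -, -⟩; exact h
    · intro h
      exact ⟨h, hv, (SimpleGraph.ConnectedComponent.connectedComponentMk_eq_of_adj h.symm).trans hv⟩
  have hcdeg : ∀ (c : G.ConnectedComponent) (v : V), G.connectedComponentMk v = c →
      (compGraph G c).degree v = G.degree v := by
    intro c v hv
    unfold SimpleGraph.degree
    rw [hnb c v hv]
  have hcdeg0 : ∀ (c : G.ConnectedComponent) (v : V), G.connectedComponentMk v ≠ c →
      (compGraph G c).degree v = 0 := by
    intro c v hv
    rw [SimpleGraph.degree]
    rw [Finset.card_eq_zero]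
    ext u
    simp only [SimpleGraph.mem_neighborFinset, Finset.notMem_empty, iff_false]
    rintro ⟨-, h1, -⟩; exact hv h1
  -- finsets
  set oddF : G.ConnectedComponent → Finset V :=
    fun c => univ.filter fun v => Odd ((compGraph G c).degree v) with hoddF
  set suppF : G.ConnectedComponent → Finset V :=
    fun c => univ.filter fun v => G.connectedComponentMk v = c with hsuppF
  set eC : G.ConnectedComponent → ℕ := fun c => ((compGraph G c).edgeFinset).card with heC
  have hmem_oddF : ∀ (c : G.ConnectedComponent) (v : V),
      v ∈ oddF c ↔ (G.connectedComponentMk v = c ∧ Odd (G.degree v)) := by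
    intro c v
    simp only [hoddF, mem_filter, mem_univ, true_and]
    constructor
    · intro h
      by_cases hv : G.connectedComponentMk v = c
      · exact ⟨hv, (hcdeg c v hv) ▸ h⟩
      · rw [hcdeg0 c v hv] at h; simp at h
    · rintro ⟨hv, h⟩
      rw [hcdeg c v hv]; exact h
  -- parity of each component's odd count
  have heven : ∀ c, Even (oddF c).card := fun c =>
    SimpleGraph.even_card_odd_degree_vertices (compGraph G c)
  -- sum of degrees in compGraph
  have h2e : ∀ c, ∑ v, (compGraph G c).degree v = 2 * eC c := fun c =>
    SimpleGraph.sum_degrees_eq_twice_card_edges (compGraph G c)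
  -- partition of odd vertices
  have hOcard : (univ.filter fun v => Odd (G.degree v)).card = 12 := by
    have : {v : V | Odd ((G.neighborSet v).ncard)} = ↑(univ.filter fun v => Odd (G.degree v)) := by
      ext v; simp [hdeg v]
    rw [this, Set.ncard_coe_finset] at hodd
    exact hodd
  have hodd_sum : ∑ c, (oddF c).card = 12 := by
    rw [← hOcard]
    rw [Finset.card_eq_sum_card_fiberwise
      (f := fun v => G.connectedComponentMk v) (t := univ) (fun v _ => mem_univ _)]
    apply Finset.sum_congr rfl
    intro c _
    congr 1
    ext v
    simp only [mem_filter, mem_univ, true_and, hmem_oddF]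
    tauto
  -- partition of edges (via degree sums)
  have hEcard : G.edgeFinset.card = 8 := by
    rw [← Set.ncard_coe_finset, SimpleGraph.coe_edgeFinset]
    exact hedges
  have hedge_sum : ∑ c, eC c = 8 := by
    have hdouble : ∑ c, 2 * eC c = 2 * 8 := by
      have : ∀ v : V, ∑ c, (compGraph G c).degree v = G.degree v := by
        intro v
        have h1 : ∀ c ∈ (univ : Finset G.ConnectedComponent),
            (compGraph G c).degree v =
              if c = G.connectedComponentMk v then G.degree v else 0 := by
          intro c _
          by_cases hc : c = G.connectedComponentMk v
          · rw [if_pos hc]; exact hcdeg c v hc.symm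
          · rw [if_neg hc]; exact hcdeg0 c v (fun h => hc h.symm)
        rw [Finset.sum_congr rfl h1, Finset.sum_ite_eq' univ (G.connectedComponentMk v)]
        simp
      calc ∑ c, 2 * eC c = ∑ c, ∑ v, (compGraph G c).degree v := by
              exact Finset.sum_congr rfl (fun c _ => (h2e c).symm)
        _ = ∑ v, ∑ c, (compGraph G c).degree v := Finset.sum_comm
        _ = ∑ v, G.degree v := Finset.sum_congr rfl (fun v _ => this v)
        _ = 2 * G.edgeFinset.card := SimpleGraph.sum_degrees_eq_twice_card_edges G
        _ = 2 * 8 := by rw [hEcard]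
    rw [← Finset.mul_sum] at hdouble
    omega
  -- each component: odd count ≤ 2 * edges
  have hodd_le : ∀ c, (oddF c).card ≤ 2 * eC c := by
    intro c
    rw [← h2e c]
    calc (oddF c).card = ∑ _v ∈ oddF c, 1 := by simp
      _ ≤ ∑ v ∈ oddF c, (compGraph G c).degree v := by
          apply Finset.sum_le_sum
          intro v hv
          simp only [hoddF, mem_filter] at hv
          exact Nat.one_le_iff_ne_zero.mpr (by rintro h; rw [h] at hv; simp at hv)
      _ ≤ ∑ v, (compGraph G c).degree v :=
          Finset.sum_le_sum_of_subset (Finset.subset_univ _)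
  -- main per-component work
  intro c
  -- rewrite goal in terms of oddF c
  have hgoal : {v : V | G.connectedComponentMk v = c ∧ Odd ((G.neighborSet v).ncard)}.ncard
      = (oddF c).card := by
    have : {v : V | G.connectedComponentMk v = c ∧ Odd ((G.neighborSet v).ncard)}
        = ↑(oddF c) := by
      ext v
      simp only [Set.mem_setOf_eq, Finset.coe_filter, hdeg v, hmem_oddF, Finset.mem_coe]
    rw [this, Set.ncard_coe_finset]
  rw [hgoal]
  set k := (oddF c).card with hk
  -- structural counting: 2 * eC c ≤ 4 + k
  have hsplit_odd : k + ∑ c' ∈ univ.erase c, (oddF c').card = 12 := by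
    have h := Finset.add_sum_erase univ (fun c' => (oddF c').card) (mem_univ c)
    rw [hodd_sum] at h
    exact h
  have hsplit_edge : eC c + ∑ c' ∈ univ.erase c, eC c' = 8 := by
    have h := Finset.add_sum_erase univ eC (mem_univ c)
    rw [hedge_sum] at h
    exact h
  have hrest : ∑ c' ∈ univ.erase c, (oddF c').card ≤ 2 * ∑ c' ∈ univ.erase c, eC c' := by
    rw [Finset.mul_sum]
    exact Finset.sum_le_sum (fun c' _ => hodd_le c')
  have hmain : 2 * eC c ≤ 4 + k := by omega
  -- exclude k = 0
  have hsupp_mem : ∀ v, v ∈ suppF c ↔ G.connectedComponentMk v = c := by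
    intro v; simp [hsuppF]
  by_cases hk0 : k = 0
  · exfalso
    -- every vertex of the component has even, nonzero degree, hence ≥ 2
    have hdeg2 : ∀ v ∈ suppF c, 2 ≤ G.degree v := by
      intro v hv
      rw [hsupp_mem] at hv
      have hnotodd : ¬ Odd (G.degree v) := by
        intro ho
        have : v ∈ oddF c := (hmem_oddF c v).2 ⟨hv, ho⟩
        rw [Finset.card_eq_zero] at hk0
        rw [hk0] at this
        simp at this
      have hne0 : G.degree v ≠ 0 := by rw [← hdeg v]; exact hiso v
      rw [Nat.not_odd_iff_even] at hnotodd
      obtain ⟨m, hm⟩ := hnotodd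
      omega
    -- the component has at least 3 vertices
    obtain ⟨v0, hv0⟩ := c.exists_rep
    have hv0s : v0 ∈ suppF c := (hsupp_mem v0).2 hv0
    obtain ⟨a, ha, b, hb, hab⟩ := Finset.one_lt_card.mp
      (lt_of_lt_of_le one_lt_two (hdeg2 v0 hv0s))
    rw [SimpleGraph.mem_neighborFinset] at ha hb
    have has : a ∈ suppF c := (hsupp_mem a).2
      ((SimpleGraph.ConnectedComponent.connectedComponentMk_eq_of_adj ha.symm).trans hv0)
    have hbs : b ∈ suppF c := (hsupp_mem b).2
      ((SimpleGraph.ConnectedComponent.connectedComponentMk_eq_of_adj hb.symm).trans hv0)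
    have hsupp3 : 3 ≤ (suppF c).card := by
      have hsub : {v0, a, b} ⊆ suppF c := by
        intro x hx
        simp only [Finset.mem_insert, Finset.mem_singleton] at hx
        rcases hx with rfl | rfl | rfl <;> assumption
      have h3 : ({v0, a, b} : Finset V).card = 3 := by
        rw [Finset.card_insert_of_notMem
            (by simp [G.ne_of_adj ha, G.ne_of_adj hb] : v0 ∉ ({a, b} : Finset V)),
          Finset.card_insert_of_notMem (by simpa using hab), Finset.card_singleton]
      exact h3 ▸ Finset.card_le_card hsub
    -- but then 2 * eC c ≥ 6, contradicting 2 * eC c ≤ 4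
    have : 2 * (suppF c).card ≤ 2 * eC c := by
      rw [← h2e c]
      calc 2 * (suppF c).card = ∑ _v ∈ suppF c, 2 := by simp [mul_comm]
        _ ≤ ∑ v ∈ suppF c, (compGraph G c).degree v := by
            apply Finset.sum_le_sum
            intro v hv
            rw [hcdeg c v ((hsupp_mem v).1 hv)]
            exact hdeg2 v hv
        _ ≤ ∑ v, (compGraph G c).degree v :=
            Finset.sum_le_sum_of_subset (Finset.subset_univ _)
    omega
  · -- k ≥ 2, and k ≤ suppF.card ≤ eC c + 1 gives k ≤ 6
    obtain ⟨v0, hv0⟩ := c.exists_rep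
    have hv0s : v0 ∈ suppF c := (hsupp_mem v0).2 hv0
    -- injection from (suppF c).erase v0 into edges of compGraph
    have hinj : ((suppF c).erase v0).card ≤ eC c := by
      have hex : ∀ w ∈ (suppF c).erase v0,
          ∃ x, G.Adj w x ∧ G.dist x v0 + 1 = G.dist w v0 := by
        intro w hw
        obtain ⟨hne, hws⟩ := Finset.mem_erase.mp hw
        have hreach : G.Reachable w v0 :=
          SimpleGraph.ConnectedComponent.exact (((hsupp_mem w).1 hws).trans hv0.symm)
        exact exists_adj_dist_succ G hreach hne
      set f : V → Sym2 V := fun w =>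
        if h : ∃ x, G.Adj w x ∧ G.dist x v0 + 1 = G.dist w v0 then s(w, h.choose)
        else s(w, w) with hf
      apply Finset.card_le_card_of_injOn f
      · intro w hw
        have h := hex w hw
        obtain ⟨hne, hws⟩ := Finset.mem_erase.mp hw
        have hfw : f w = s(w, h.choose) := dif_pos h
        rw [hfw, Finset.mem_coe, SimpleGraph.mem_edgeFinset, SimpleGraph.mem_edgeSet]
        obtain ⟨hadj, -⟩ := h.choose_spec
        refine ⟨hadj, (hsupp_mem w).1 hws, ?_⟩
        exact (SimpleGraph.ConnectedComponent.connectedComponentMk_eq_of_adj hadj.symm).trans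
          ((hsupp_mem w).1 hws)
      · intro w1 hw1 w2 hw2 hfe
        have h1 := hex w1 (Finset.mem_coe.mp hw1)
        have h2 := hex w2 (Finset.mem_coe.mp hw2)
        simp only [hf] at hfe
        rw [dif_pos h1, dif_pos h2] at hfe
        rw [Sym2.eq_iff] at hfe
        rcases hfe with ⟨h, -⟩ | ⟨ha, hb⟩
        · exact h
        · exfalso
          obtain ⟨-, hd1⟩ := h1.choose_spec
          obtain ⟨-, hd2⟩ := h2.choose_spec
          rw [hb] at hd1
          rw [← ha] at hd2
          omega
    have hsupp_le : (suppF c).card ≤ eC c + 1 := by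
      have := Finset.card_erase_of_mem hv0s
      have hpos : 1 ≤ (suppF c).card := Finset.card_pos.mpr ⟨v0, hv0s⟩
      omega
    have hk_le_supp : k ≤ (suppF c).card := by
      apply Finset.card_le_card
      intro v hv
      rw [hsupp_mem]
      exact ((hmem_oddF c v).1 hv).1
    obtain ⟨m, hm⟩ := heven c
    omega
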